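/- For nondeterministic Val-automata with a present-focused and suffix-monotonic value function Val, history determinism implies determinizability by pruning; combined with the converse, history determinism and determinizability by pruning coincide for such automata. -/

import Mathlib

/-- A nondeterministic quantitative automaton over alphabet `A`:
states, an initial state, and a total transition relation with rational weights. -/
structure NQA (A : Type) where
  Q : Type
  init : Q
  δ : Q → A → Set (ℚ × Q)
  total : ∀ q a, (δ q a).Nonempty

/-- `IsRunFrom M q u xs`: `xs` is the weight sequence of a run of `M` on the
finite word `u` starting in state `q`. -/
inductive IsRunFrom {A : Type} (M : NQA A) : M.Q → List A → List ℚ → Prop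
  | nil (q : M.Q) : IsRunFrom M q [] []
  | cons {q : M.Q} {a : A} {u : List A} {x : ℚ} {q' : M.Q} {xs : List ℚ} :
      (x, q') ∈ M.δ q a → IsRunFrom M q' u xs → IsRunFrom M q (a :: u) (x :: xs)

/-- The value of the automaton on a finite word: supremum of values of runs. -/
noncomputable def AVal {A : Type} (M : NQA A) (Val : List ℚ → ℝ) (u : List A) : ℝ :=
  sSup {r : ℝ | ∃ xs, IsRunFrom M M.init u xs ∧ Val xs = r}

/-- The state reached by Eve's letter-game strategy `s` (which picks a
transition from the word read so far and the current letter) after reading `u`,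
starting from state `q` with word-history `pre`. -/
def stratStateAux {A : Type} (M : NQA A) (s : List A → A → ℚ × M.Q)
    (pre : List A) (q : M.Q) : List A → M.Q
  | [] => q
  | a :: u => stratStateAux M s (pre ++ [a]) (s pre a).2 u

/-- The state reached by strategy `s` after the word `u`. -/
def stratState {A : Type} (M : NQA A) (s : List A → A → ℚ × M.Q) (u : List A) : M.Q :=
  stratStateAux M s [] M.init u

/-- The weights of the run built by strategy `s` on the word `u`. -/
def stratWeightsAux {A : Type} (M : NQA A) (s : List A → A → ℚ × M.Q)
    (pre : List A) : List A → List ℚ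
  | [] => []
  | a :: u => (s pre a).1 :: stratWeightsAux M s (pre ++ [a]) u

def stratWeights {A : Type} (M : NQA A) (s : List A → A → ℚ × M.Q) (u : List A) : List ℚ :=
  stratWeightsAux M s [] u

/-- The strategy only uses transitions of the automaton. -/
def StratLegal {A : Type} (M : NQA A) (s : List A → A → ℚ × M.Q) : Prop :=
  ∀ u a, s u a ∈ M.δ (stratState M s u) a

/-- A strategy of Eve in the letter game is cautious if it never makes a move
after which the best achievable value of some continuation strictly drops. -/
def Cautious {A : Type} (M : NQA A) (Val : List ℚ → ℝ) (s : List A → A → ℚ × M.Q) : Prop :=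
  StratLegal M s ∧
  ∀ u a v,
    sSup {r : ℝ | ∃ xs, IsRunFrom M (stratState M s u) (a :: v) xs ∧
        r = Val (stratWeights M s u ++ xs)} ≤
    sSup {r : ℝ | ∃ ys, IsRunFrom M (s u a).2 v ys ∧
        r = Val (stratWeights M s u ++ (s u a).1 :: ys)}

/-- `M` is history deterministic: Eve wins her letter game, i.e. she has a
strategy building, letter by letter, runs achieving the automaton's value. -/
def HistoryDet {A : Type} (M : NQA A) (Val : List ℚ → ℝ) : Prop :=
  ∃ s : List A → A → ℚ × M.Q, StratLegal M s ∧
    ∀ u : List A, AVal M Val u ≤ Val (stratWeights M s u)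

/-- Weights of the run of the pruned (deterministic) automaton given by the
choice function `σ` from state `q` on a word. -/
def detWeights {A : Type} (M : NQA A) (σ : M.Q → A → ℚ × M.Q) : M.Q → List A → List ℚ
  | _, [] => []
  | q, a :: u => (σ q a).1 :: detWeights M σ (σ q a).2 u

/-- `M` is determinizable by pruning: some choice of a single transition per
state-letter pair yields an equivalent deterministic automaton. -/
def DetByPruning {A : Type} (M : NQA A) (Val : List ℚ → ℝ) : Prop :=
  ∃ σ : M.Q → A → ℚ × M.Q, (∀ q a, σ q a ∈ M.δ q a) ∧
    ∀ u : List A, Val (detWeights M σ M.init u) = AVal M Val u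

-- helpers
section Helpers
variable {A : Type}

lemma runs_nonempty (M : NQA A) : ∀ (u : List A) (q : M.Q), ∃ xs, IsRunFrom M q u xs
  | [], q => ⟨[], .nil q⟩
  | a :: u, q => by
      obtain ⟨⟨x, q'⟩, ht⟩ := M.total q a
      obtain ⟨xs, hr⟩ := runs_nonempty M u q'
      exact ⟨x :: xs, .cons ht hr⟩

lemma runs_finite (M : NQA A) (hfin : ∀ q a, (M.δ q a).Finite) :
    ∀ (u : List A) (q : M.Q), {xs | IsRunFrom M q u xs}.Finite
  | [], q => Set.Finite.subset (Set.finite_singleton ([] : List ℚ)) (by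
      intro xs hxs; cases hxs; simp)
  | a :: u, q => by
      have hsub : {xs | IsRunFrom M q (a :: u) xs} ⊆
          ⋃ t ∈ M.δ q a, (fun ys => t.1 :: ys) '' {ys | IsRunFrom M t.2 u ys} := by
        intro xs hxs
        cases hxs with
        | cons ht hr => exact Set.mem_biUnion ht ⟨_, hr, rfl⟩
      exact Set.Finite.subset ((hfin q a).biUnion fun t _ =>
        ((runs_finite M hfin u t.2).image _)) hsub

lemma set_comm {α : Type*} (Q : α → Prop) (f : α → ℝ) :
    {r : ℝ | ∃ x, Q x ∧ r = f x} = f '' {x | Q x} :=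
  Set.ext fun r => ⟨fun ⟨x, h1, h2⟩ => ⟨x, h1, h2.symm⟩, fun ⟨x, h1, h2⟩ => ⟨x, h1, h2.symm⟩⟩

lemma set_comm' {α : Type*} (Q : α → Prop) (f : α → ℝ) :
    {r : ℝ | ∃ x, Q x ∧ f x = r} = f '' {x | Q x} :=
  Set.ext fun r => ⟨fun ⟨x, h1, h2⟩ => ⟨x, h1, h2⟩, fun ⟨x, h1, h2⟩ => ⟨x, h1, h2⟩⟩

lemma sup_transfer (F G : List ℚ → ℝ) (S T : Set (List ℚ))
    (hS : S.Finite) (hT : T.Finite) (hSn : S.Nonempty) (hTn : T.Nonempty)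
    (hmono : ∀ x y, F x ≤ F y → G x ≤ G y)
    (h : sSup (F '' S) ≤ sSup (F '' T)) : sSup (G '' S) ≤ sSup (G '' T) := by
  obtain ⟨t0, ht0, ht0e⟩ := (hTn.image F).csSup_mem (hT.image F)
  apply csSup_le (hSn.image G)
  rintro r ⟨x, hx, rfl⟩
  have h1 : F x ≤ F t0 := by
    calc F x ≤ sSup (F '' S) := le_csSup (hS.image F).bddAbove ⟨x, hx, rfl⟩
    _ ≤ sSup (F '' T) := h
    _ = F t0 := ht0e.symm
  exact le_trans (hmono _ _ h1) (le_csSup (hT.image G).bddAbove ⟨t0, ht0, rfl⟩)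

lemma stratStateAux_snoc (M : NQA A) (s : List A → A → ℚ × M.Q) :
    ∀ (u pre : List A) (q : M.Q) (a : A),
      stratStateAux M s pre q (u ++ [a]) = (s (pre ++ u) a).2
  | [], pre, q, a => by simp [stratStateAux]
  | b :: u, pre, q, a => by
      simp only [List.cons_append, stratStateAux]
      show stratStateAux M s (pre ++ [b]) (s pre b).2 (u ++ [a]) = _
      rw [stratStateAux_snoc M s u]
      simp

lemma stratWeightsAux_snoc (M : NQA A) (s : List A → A → ℚ × M.Q) :
    ∀ (u pre : List A) (a : A),
      stratWeightsAux M s pre (u ++ [a]) = stratWeightsAux M s pre u ++ [(s (pre ++ u) a).1]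
  | [], pre, a => by simp [stratWeightsAux]
  | b :: u, pre, a => by
      simp only [List.cons_append, stratWeightsAux]
      show (s pre b).1 :: stratWeightsAux M s (pre ++ [b]) (u ++ [a]) = _
      rw [stratWeightsAux_snoc M s u]
      simp

lemma stratState_snoc (M : NQA A) (s : List A → A → ℚ × M.Q) (u : List A) (a : A) :
    stratState M s (u ++ [a]) = (s u a).2 := by
  simpa [stratState] using stratStateAux_snoc M s u [] M.init a

lemma stratWeights_snoc (M : NQA A) (s : List A → A → ℚ × M.Q) (u : List A) (a : A) :
    stratWeights M s (u ++ [a]) = stratWeights M s u ++ [(s u a).1] := by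
  simpa [stratWeights] using stratWeightsAux_snoc M s u [] a

lemma run_strat (M : NQA A) (s : List A → A → ℚ × M.Q) (hs : StratLegal M s) :
    ∀ (u v : List A) (xs : List ℚ), IsRunFrom M (stratState M s u) v xs →
      IsRunFrom M M.init (u ++ v) (stratWeights M s u ++ xs) := by
  intro u
  induction u using List.reverseRecOn with
  | nil =>
      intro v xs h
      simpa [stratWeights, stratWeightsAux, stratState, stratStateAux] using h
  | append_singleton u a ih =>
      intro v xs h
      rw [stratState_snoc] at h
      have h2 : IsRunFrom M (stratState M s u) (a :: v) ((s u a).1 :: xs) := .cons (hs u a) h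
      have h3 := ih (a :: v) _ h2
      rw [stratWeights_snoc]
      simpa [List.append_assoc] using h3

lemma strat_decomp (M : NQA A) (s : List A → A → ℚ × M.Q) (hs : StratLegal M s) :
    ∀ (v u : List A), ∃ zs, IsRunFrom M (stratState M s u) v zs ∧
      stratWeights M s (u ++ v) = stratWeights M s u ++ zs
  | [], u => ⟨[], .nil _, by simp⟩
  | a :: v, u => by
      obtain ⟨zs, hrun, heq⟩ := strat_decomp M s hs v (u ++ [a])
      rw [stratState_snoc] at hrun
      refine ⟨(s u a).1 :: zs, .cons (hs u a) hrun, ?_⟩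
      have h1 : u ++ a :: v = (u ++ [a]) ++ v := by simp
      rw [h1, heq, stratWeights_snoc]
      simp

def detState (M : NQA A) (σ : M.Q → A → ℚ × M.Q) : M.Q → List A → M.Q
  | q, [] => q
  | q, a :: u => detState M σ (σ q a).2 u

lemma detState_append (M : NQA A) (σ : M.Q → A → ℚ × M.Q) :
    ∀ (u v : List A) (q : M.Q), detState M σ q (u ++ v) = detState M σ (detState M σ q u) v
  | [], v, q => rfl
  | a :: u, v, q => detState_append M σ u v _

lemma det_stateAux (M : NQA A) (σ : M.Q → A → ℚ × M.Q) (s2 : List A → A → ℚ × M.Q)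
    (hs2 : ∀ u a, s2 u a = σ (detState M σ M.init u) a) :
    ∀ (u pre : List A),
      stratStateAux M s2 pre (detState M σ M.init pre) u = detState M σ M.init (pre ++ u)
  | [], pre => by simp [stratStateAux]
  | a :: u, pre => by
      have h1 : (s2 pre a).2 = detState M σ M.init (pre ++ [a]) := by
        rw [hs2, detState_append]; rfl
      show stratStateAux M s2 (pre ++ [a]) (s2 pre a).2 u = _
      rw [h1, det_stateAux M σ s2 hs2 u (pre ++ [a])]
      simp

lemma det_state (M : NQA A) (σ : M.Q → A → ℚ × M.Q) (s2 : List A → A → ℚ × M.Q)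
    (hs2 : ∀ u a, s2 u a = σ (detState M σ M.init u) a) (u : List A) :
    stratState M s2 u = detState M σ M.init u := by
  simpa [stratState, detState] using det_stateAux M σ s2 hs2 u []

lemma det_weightsAux (M : NQA A) (σ : M.Q → A → ℚ × M.Q) (s2 : List A → A → ℚ × M.Q)
    (hs2 : ∀ u a, s2 u a = σ (detState M σ M.init u) a) :
    ∀ (u pre : List A),
      stratWeightsAux M s2 pre u = detWeights M σ (detState M σ M.init pre) u
  | [], pre => rfl
  | a :: u, pre => by
      have h1 : (s2 pre a).2 = detState M σ M.init (pre ++ [a]) := by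
        rw [hs2, detState_append]; rfl
      show (s2 pre a).1 :: stratWeightsAux M s2 (pre ++ [a]) u = _
      rw [det_weightsAux M σ s2 hs2 u (pre ++ [a]), hs2]
      show _ :: detWeights M σ (detState M σ M.init (pre ++ [a])) u = _
      rw [← h1, hs2]
      rfl

lemma det_weights (M : NQA A) (σ : M.Q → A → ℚ × M.Q) (s2 : List A → A → ℚ × M.Q)
    (hs2 : ∀ u a, s2 u a = σ (detState M σ M.init u) a) (u : List A) :
    stratWeights M s2 u = detWeights M σ M.init u :=
  det_weightsAux M σ s2 hs2 u []

end Helpers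

/-- For nondeterministic Val-automata with a present-focused and
suffix-monotonic value function, history determinism and determinizability by
pruning coincide. -/
theorem hd_iff_dbp {A : Type} (Val : List ℚ → ℝ)
    (hPF : ∀ (M' : NQA A) (s' : List A → A → ℚ × M'.Q), Cautious M' Val s' →
      ∀ u : List A, Val (stratWeights M' s' u) = AVal M' Val u)
    (hSM : ∀ (S : Finset ℚ) (α β β' : List ℚ),
      (∀ x ∈ α, x ∈ S) → (∀ x ∈ β, x ∈ S) → (∀ x ∈ β', x ∈ S) →
      (Val β ≥ Val β' ↔ Val (α ++ β) ≥ Val (α ++ β')))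
    (M : NQA A) (hfin : ∀ q a, (M.δ q a).Finite) :
    HistoryDet M Val ↔ DetByPruning M Val := by
  classical
  -- unconditional suffix monotonicity
  have sm : ∀ (α β β' : List ℚ), Val β ≥ Val β' ↔ Val (α ++ β) ≥ Val (α ++ β') := by
    intro α β β'
    refine hSM (α ++ β ++ β').toFinset α β β' ?_ ?_ ?_ <;>
      · intro x hx
        simp only [List.mem_toFinset, List.mem_append]
        tauto
  have mono1 : ∀ (α x y : List ℚ), Val (α ++ x) ≤ Val (α ++ y) → Val x ≤ Val y :=
    fun α x y h => (sm α y x).mpr h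
  have mono2 : ∀ (α x y : List ℚ), Val x ≤ Val y → Val (α ++ x) ≤ Val (α ++ y) :=
    fun α x y h => (sm α y x).mp h
  have Rfin : ∀ (u : List A) (q : M.Q), {xs | IsRunFrom M q u xs}.Finite :=
    runs_finite M hfin
  have Rne : ∀ (u : List A) (q : M.Q), ({xs | IsRunFrom M q u xs}).Nonempty :=
    fun u q => runs_nonempty M u q
  have hAVal : ∀ u : List A, AVal M Val u = sSup (Val '' {xs | IsRunFrom M M.init u xs}) :=
    fun u => by rw [AVal, set_comm' (fun xs => IsRunFrom M M.init u xs) Val]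
  constructor
  · -- HD → DBP
    rintro ⟨s, hs, hwin⟩
    -- step 1: prefixed cautiousness of the winning strategy
    have step1 : ∀ (u : List A) (a : A) (v : List A),
        sSup ((fun xs => Val (stratWeights M s u ++ xs)) ''
            {xs | IsRunFrom M (stratState M s u) (a :: v) xs}) ≤
        sSup ((fun ys => Val (stratWeights M s u ++ (s u a).1 :: ys)) ''
            {ys | IsRunFrom M (s u a).2 v ys}) := by
      intro u a v
      obtain ⟨zs, hz, hzeq⟩ := strat_decomp M s hs v (u ++ [a])
      rw [stratState_snoc] at hz
      have hw1 : stratWeights M s (u ++ a :: v) =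
          stratWeights M s u ++ (s u a).1 :: zs := by
        have h1 : u ++ a :: v = (u ++ [a]) ++ v := by simp
        rw [h1, hzeq, stratWeights_snoc]
        simp
      apply csSup_le ((Rne (a :: v) (stratState M s u)).image _)
      rintro r ⟨xs, hxs, rfl⟩
      have hrun0 : IsRunFrom M M.init (u ++ a :: v) (stratWeights M s u ++ xs) :=
        run_strat M s hs u (a :: v) xs hxs
      have h2 : Val (stratWeights M s u ++ xs) ≤ AVal M Val (u ++ a :: v) := by
        rw [hAVal]
        exact le_csSup ((Rfin (u ++ a :: v) M.init).image _).bddAbove ⟨_, hrun0, rfl⟩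
      refine h2.trans ((hwin (u ++ a :: v)).trans ?_)
      rw [hw1]
      exact le_csSup ((Rfin v (s u a).2).image _).bddAbove ⟨zs, hz, rfl⟩
    -- good positional moves
    set good : M.Q → A → ℚ × M.Q → Prop := fun q a t =>
      t ∈ M.δ q a ∧ (∃ w, stratState M s w = t.2) ∧
      ∀ v, sSup (Val '' {xs | IsRunFrom M q (a :: v) xs}) ≤
        sSup ((fun ys => Val (t.1 :: ys)) '' {ys | IsRunFrom M t.2 v ys}) with hgood
    have claim : ∀ (q : M.Q), (∃ u, stratState M s u = q) → ∀ a, ∃ t, good q a t := by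
      rintro q ⟨u, rfl⟩ a
      refine ⟨s u a, hs u a, ⟨u ++ [a], stratState_snoc M s u a⟩, ?_⟩
      intro v
      have h1 := step1 u a v
      rw [← Set.image_image (fun l => Val (stratWeights M s u ++ l)) (fun ys => (s u a).1 :: ys)]
        at h1
      have h2 := sup_transfer (fun l => Val (stratWeights M s u ++ l)) Val
        {xs | IsRunFrom M (stratState M s u) (a :: v) xs}
        ((fun ys => (s u a).1 :: ys) '' {ys | IsRunFrom M (s u a).2 v ys})
        (Rfin _ _) ((Rfin _ _).image _) (Rne _ _) ((Rne _ _).image _)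
        (mono1 _) h1
      rwa [Set.image_image] at h2
    -- the pruning choice
    set σ : M.Q → A → ℚ × M.Q := fun q a =>
      if h : ∃ t, good q a t then h.choose else (M.total q a).some with hσdef
    have hσδ : ∀ q a, σ q a ∈ M.δ q a := by
      intro q a
      rw [hσdef]
      by_cases h : ∃ t, good q a t
      · simp only [dif_pos h]; exact h.choose_spec.1
      · simp only [dif_neg h]; exact (M.total q a).some_mem
    have hσgood : ∀ q a, (∃ t, good q a t) → good q a (σ q a) := by
      intro q a h
      rw [hσdef]
      simp only [dif_pos h]
      exact h.choose_spec
    -- reachability invariant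
    have reach : ∀ u : List A, ∃ w, stratState M s w = detState M σ M.init u := by
      intro u
      induction u using List.reverseRecOn with
      | nil => exact ⟨[], rfl⟩
      | append_singleton u a ih =>
          obtain ⟨w, hw⟩ := ih
          have h1 : detState M σ M.init (u ++ [a]) = (σ (detState M σ M.init u) a).2 := by
            rw [detState_append]; rfl
          rw [h1]
          exact (hσgood _ a (claim _ ⟨w, hw⟩ a)).2.1
    have hgoodreach : ∀ (u : List A) (a : A),
        good (detState M σ M.init u) a (σ (detState M σ M.init u) a) :=
      fun u a => hσgood _ a (claim _ (reach u) a)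
    -- the induced letter strategy
    set s2 : List A → A → ℚ × M.Q := fun u a => σ (detState M σ M.init u) a with hs2def
    have hs2 : ∀ u a, s2 u a = σ (detState M σ M.init u) a := fun _ _ => rfl
    have hstate : ∀ u, stratState M s2 u = detState M σ M.init u := det_state M σ s2 hs2
    have hweights : ∀ u, stratWeights M s2 u = detWeights M σ M.init u := det_weights M σ s2 hs2
    have hlegal : StratLegal M s2 := by
      intro u a
      rw [hstate u]
      exact hσδ _ a
    have hcaut : Cautious M Val s2 := by
      refine ⟨hlegal, ?_⟩
      intro u a v
      rw [set_comm (fun xs => IsRunFrom M (stratState M s2 u) (a :: v) xs)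
          (fun xs => Val (stratWeights M s2 u ++ xs)),
        set_comm (fun ys => IsRunFrom M (s2 u a).2 v ys)
          (fun ys => Val (stratWeights M s2 u ++ (s2 u a).1 :: ys))]
      have hg := (hgoodreach u a).2.2 v
      rw [← Set.image_image Val (fun ys => (σ (detState M σ M.init u) a).1 :: ys)] at hg
      have h2 := sup_transfer Val (fun l => Val (stratWeights M s2 u ++ l))
        {xs | IsRunFrom M (detState M σ M.init u) (a :: v) xs}
        ((fun ys => (σ (detState M σ M.init u) a).1 :: ys) ''
          {ys | IsRunFrom M (σ (detState M σ M.init u) a).2 v ys})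
        (Rfin _ _) ((Rfin _ _).image _) (Rne _ _) ((Rne _ _).image _)
        (mono2 _) hg
      rw [Set.image_image] at h2
      rw [hstate u]
      exact h2
    refine ⟨σ, hσδ, ?_⟩
    intro u
    rw [← hweights u]
    exact hPF M s2 hcaut u
  · -- DBP → HD
    rintro ⟨σ, hσ, hval⟩
    set s2 : List A → A → ℚ × M.Q := fun u a => σ (detState M σ M.init u) a with hs2def
    have hs2 : ∀ u a, s2 u a = σ (detState M σ M.init u) a := fun _ _ => rfl
    have hstate : ∀ u, stratState M s2 u = detState M σ M.init u := det_state M σ s2 hs2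
    have hweights : ∀ u, stratWeights M s2 u = detWeights M σ M.init u := det_weights M σ s2 hs2
    refine ⟨s2, ?_, ?_⟩
    · intro u a
      rw [hstate u]
      exact hσ _ a
    · intro u
      rw [hweights u, hval u]
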